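/- Let p ≥ 1, let β ∈ ℝᵖ with ‖β‖ = 1, let C ∈ (0,1] and δ ∈ (0,1/4), and set m = √(1+δ²). Define η : ℝᵖ → ℝ by: η(x) = 1/2 + ⟨β,x⟩/C if |⟨β,x⟩| ≤ min( max(C·δ, |x₁|/(2m)), 1/4 ), and η(x) = 1/2 + min( max(δ, |x₁|/(2Cm)), 1/4 )·sign(⟨β,x⟩) otherwise, where x₁ denotes the first coordinate of x. Then for every real t with 0 < t < 1/4: μ_p{ x ∈ ℝᵖ : |η(x) − 1/2| ≤ t } ≤ 5·√(2/π)·C·t. -/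

import Mathlib

open MeasureTheory
open scoped Classical
open MeasureTheory.Measure ProbabilityTheory Real ENNReal

/-- The standard Gaussian measure on `ℝᵖ`, i.e. the `p`-fold product of `N(0,1)`. -/
noncomputable def stdGaussian (p : ℕ) : Measure (EuclideanSpace ℝ (Fin p)) :=
  Measure.map (MeasurableEquiv.toLp 2 (Fin p → ℝ))
    (Measure.pi fun _ : Fin p => ProbabilityTheory.gaussianReal 0 1)

lemma lintegral_pi_prod {n : ℕ} (μ : Fin n → Measure ℝ) [∀ i, SigmaFinite (μ i)]
    (f : Fin n → ℝ → ℝ≥0∞) (hf : ∀ i, Measurable (f i)) :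
    ∫⁻ x, ∏ i, f i (x i) ∂(Measure.pi μ) = ∏ i, ∫⁻ y, f i y ∂(μ i) := by
  induction n with
  | zero => simp
  | succ n ih =>
    have h := (measurePreserving_piFinSuccAbove μ 0).symm
    have hF : Measurable fun x : Fin (n+1) → ℝ => ∏ i, f i (x i) :=
      Finset.measurable_prod _ fun i _ => (hf i).comp (measurable_pi_apply i)
    rw [← h.lintegral_comp hF]
    simp_rw [MeasurableEquiv.piFinSuccAbove_symm_apply, Fin.insertNthEquiv,
      Equiv.coe_fn_mk, Fin.insertNth_zero, Fin.prod_univ_succ, Fin.cons_zero, Fin.cons_succ,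
      Fin.zero_succAbove, cast_eq]
    have hmul := lintegral_prod_mul (μ := μ 0) (ν := Measure.pi fun j => μ j.succ)
      (f := f 0) (g := fun y : Fin n → ℝ => ∏ x, f x.succ (y x)) (hf 0).aemeasurable
      ((Finset.measurable_prod _ fun i _ => (hf _).comp (measurable_pi_apply i)).aemeasurable)
    rw [hmul, ih (fun i => μ i.succ) (fun i => f i.succ) (fun i => hf _)]

lemma map_withDensity_equiv {α β : Type*} [MeasurableSpace α] [MeasurableSpace β]
    (e : α ≃ᵐ β) (μ : Measure α) (f : β → ℝ≥0∞) (hf : Measurable f) :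
    (μ.withDensity (fun x => f (e x))).map e = (μ.map e).withDensity f := by
  ext s hs
  rw [Measure.map_apply e.measurable hs, withDensity_apply _ (e.measurable hs),
    withDensity_apply _ hs, setLIntegral_map hs hf e.measurable]

lemma pi_gaussian_eq_withDensity (p : ℕ) :
    (Measure.pi fun _ : Fin p => gaussianReal 0 1)
      = (volume : Measure (Fin p → ℝ)).withDensity
          (fun x => ∏ i, gaussianPDF 0 1 (x i)) := by
  refine Measure.pi_eq fun s hs => ?_
  rw [withDensity_apply _ (MeasurableSet.univ_pi hs),
    ← lintegral_indicator (MeasurableSet.univ_pi hs) _]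
  have hind : ∀ x : Fin p → ℝ,
      (Set.univ.pi s).indicator (fun x => ∏ i, gaussianPDF 0 1 (x i)) x
        = ∏ i, (s i).indicator (gaussianPDF 0 1) (x i) := by
    intro x
    by_cases hx : x ∈ Set.univ.pi s
    · rw [Set.indicator_of_mem hx]
      exact Finset.prod_congr rfl fun i _ =>
        (Set.indicator_of_mem (hx i (Set.mem_univ i)) _).symm
    · rw [Set.indicator_of_notMem hx]
      rw [Set.mem_univ_pi] at hx
      push_neg at hx
      obtain ⟨i, hi⟩ := hx
      exact (Finset.prod_eq_zero (Finset.mem_univ i)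
        (by rw [Set.indicator_of_notMem hi])).symm
  simp_rw [hind]
  rw [volume_pi, lintegral_pi_prod _ _
    (fun i => (measurable_gaussianPDF 0 1).indicator (hs i))]
  refine Finset.prod_congr rfl fun i _ => ?_
  rw [lintegral_indicator (hs i), gaussianReal_apply 0 one_ne_zero]


noncomputable def gaussDensity (p : ℕ) (y : EuclideanSpace ℝ (Fin p)) : ℝ≥0∞ :=
  ENNReal.ofReal ((Real.sqrt (2 * Real.pi))⁻¹ ^ p * Real.exp (-‖y‖ ^ 2 / 2))

lemma measurable_gaussDensity (p : ℕ) : Measurable (gaussDensity p) := by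
  apply Measurable.ennreal_ofReal
  exact (measurable_const.mul ((measurable_norm.pow_const 2).neg.div_const 2).exp)

lemma stdGaussian_eq_withDensity (p : ℕ) :
    stdGaussian p = (volume : Measure (EuclideanSpace ℝ (Fin p))).withDensity (gaussDensity p) := by
  have e := (MeasurableEquiv.toLp 2 (Fin p → ℝ))
  rw [_root_.stdGaussian, pi_gaussian_eq_withDensity]
  have key : ∀ x : Fin p → ℝ,
      (∏ i, gaussianPDF 0 1 (x i))
        = gaussDensity p ((MeasurableEquiv.toLp 2 (Fin p → ℝ)) x) := by
    intro x
    rw [gaussDensity]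
    have hnorm : ‖(MeasurableEquiv.toLp 2 (Fin p → ℝ)) x‖ ^ 2 = ∑ i, (x i) ^ 2 := by
      rw [EuclideanSpace.norm_eq, Real.sq_sqrt (Finset.sum_nonneg fun i _ => sq_nonneg _)]
      simp [MeasurableEquiv.toLp]; rfl
    rw [hnorm]
    simp_rw [gaussianPDF_def, gaussianPDFReal]
    rw [← ENNReal.ofReal_prod_of_nonneg (fun i _ => by positivity)]
    congr 1
    rw [Finset.prod_mul_distrib, Finset.prod_const, ← Real.exp_sum]
    simp only [NNReal.coe_one, mul_one, sub_zero]
    congr 1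
    · norm_num
    · rw [← Finset.sum_div, ← Finset.sum_neg_distrib]
  simp_rw [key]
  rw [map_withDensity_equiv _ _ _ (measurable_gaussDensity p),
    (show MeasurePreserving (MeasurableEquiv.toLp 2 (Fin p → ℝ)) volume volume by simpa only [MeasurableEquiv.symm_symm] using (EuclideanSpace.volume_preserving_symm_measurableEquiv_toLp (Fin p)).symm (MeasurableEquiv.toLp 2 (Fin p → ℝ)).symm).map_eq]

open ProbabilityTheory in
lemma stdGaussian_map_isometry {p : ℕ} (R : EuclideanSpace ℝ (Fin p) ≃ₗᵢ[ℝ] EuclideanSpace ℝ (Fin p)) :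
    (stdGaussian p).map R = stdGaussian p := by
  have hRe : (⇑R : EuclideanSpace ℝ (Fin p) → EuclideanSpace ℝ (Fin p))
      = ⇑(R.toHomeomorph.toMeasurableEquiv) := rfl
  have hdens : ∀ x, gaussDensity p x = gaussDensity p (R.toHomeomorph.toMeasurableEquiv x) := by
    intro x
    simp [gaussDensity, ← hRe, R.norm_map]
  rw [stdGaussian_eq_withDensity, hRe]
  conv_lhs => rw [show (volume : Measure (EuclideanSpace ℝ (Fin p))).withDensity (gaussDensity p)
    = volume.withDensity (fun x => gaussDensity p (R.toHomeomorph.toMeasurableEquiv x)) from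
      by simp_rw [← hdens]]
  rw [map_withDensity_equiv _ _ _ (measurable_gaussDensity p), ← hRe,
    R.measurePreserving.map_eq]

open ProbabilityTheory in
lemma stdGaussian_map_eval {p : ℕ} (i : Fin p) :
    (stdGaussian p).map (fun x : EuclideanSpace ℝ (Fin p) => x i) = gaussianReal 0 1 := by
  classical
  have hev : Measurable fun x : EuclideanSpace ℝ (Fin p) => x i :=
    (measurable_pi_apply i).comp ((MeasurableEquiv.toLp 2 (Fin p → ℝ)).symm).measurable
  rw [_root_.stdGaussian, Measure.map_map hev (MeasurableEquiv.toLp 2 (Fin p → ℝ)).measurable]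
  have : (fun x : EuclideanSpace ℝ (Fin p) => x i) ∘ ⇑(MeasurableEquiv.toLp 2 (Fin p → ℝ))
      = fun y : Fin p → ℝ => y i := rfl
  rw [this]
  ext s hs
  rw [Measure.map_apply (measurable_pi_apply i) hs, Set.eval_preimage, Measure.pi_pi]
  rw [Fintype.prod_eq_single i (fun j hj => by simp [Function.update_apply, hj])]
  simp

open ProbabilityTheory in
lemma stdGaussian_map_inner {p : ℕ} (hp : 1 ≤ p) (β : EuclideanSpace ℝ (Fin p)) (hβ : ‖β‖ = 1) :
    (stdGaussian p).map (fun x => (inner ℝ β x : ℝ)) = gaussianReal 0 1 := by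
  set i₀ : Fin p := ⟨0, hp⟩
  set e₀ : EuclideanSpace ℝ (Fin p) := EuclideanSpace.single i₀ (1 : ℝ) with he₀
  have hne : ‖β‖ = ‖e₀‖ := by rw [hβ, he₀, EuclideanSpace.norm_single]; simp
  set R := Submodule.reflection (ℝ ∙ (β - e₀))ᗮ with hR
  have hRβ : R β = e₀ := Submodule.reflection_sub hne
  have hfun : (fun x => (inner ℝ β x : ℝ)) = (fun y : EuclideanSpace ℝ (Fin p) => y i₀) ∘ ⇑R := by
    funext x
    have := R.inner_map_map β x
    rw [hRβ] at this
    rw [← this, he₀, Function.comp_apply]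
    simp [EuclideanSpace.inner_single_left]
  have hg : Measurable (fun y : EuclideanSpace ℝ (Fin p) => y i₀) :=
    (measurable_pi_apply i₀).comp ((MeasurableEquiv.toLp 2 (Fin p → ℝ)).symm).measurable
  have hRm : Measurable (⇑R : EuclideanSpace ℝ (Fin p) → EuclideanSpace ℝ (Fin p)) :=
    R.continuous.measurable
  rw [hfun, ← Measure.map_map hg hRm, stdGaussian_map_isometry R, stdGaussian_map_eval i₀]

open ProbabilityTheory in
lemma gaussianReal_abs_le {a : ℝ} (ha : 0 ≤ a) :
    gaussianReal 0 1 {y : ℝ | |y| ≤ a} ≤ ENNReal.ofReal (Real.sqrt (2 / Real.pi) * a) := by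
  have hset : {y : ℝ | |y| ≤ a} = Set.Icc (-a) a := by ext y; simp [abs_le]
  rw [hset, gaussianReal_apply_eq_integral 0 one_ne_zero]
  apply ENNReal.ofReal_le_ofReal
  have hsqrt2pi : (0:ℝ) < Real.sqrt (2 * Real.pi) := Real.sqrt_pos.mpr (by positivity)
  have hkey : Real.sqrt (2 / Real.pi) = 2 / Real.sqrt (2 * Real.pi) := by
    rw [eq_div_iff hsqrt2pi.ne', ← Real.sqrt_mul (by positivity)]
    rw [show 2 / Real.pi * (2 * Real.pi) = 4 by field_simp; ring]
    rw [show (4:ℝ) = 2^2 by norm_num, Real.sqrt_sq (by norm_num)]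
  have hb : ∀ x ∈ Set.Icc (-a) a, ‖gaussianPDFReal 0 1 x‖ ≤ (Real.sqrt (2 * Real.pi))⁻¹ := by
    intro x _
    rw [Real.norm_eq_abs, abs_of_nonneg (gaussianPDFReal_nonneg _ _ _)]
    have hpdf : gaussianPDFReal 0 1 x
        = (Real.sqrt (2 * Real.pi))⁻¹ * Real.exp (-(x - 0) ^ 2 / 2) := by
      simp [gaussianPDFReal]
    rw [hpdf]
    have h1 : Real.exp (-(x - 0) ^ 2 / 2) ≤ 1 := by
      rw [Real.exp_le_one_iff]
      nlinarith [sq_nonneg (x - 0)]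
    nlinarith [h1, inv_nonneg.mpr hsqrt2pi.le, Real.exp_pos (-(x - 0) ^ 2 / 2)]
  calc ∫ x in Set.Icc (-a) a, gaussianPDFReal 0 1 x
      ≤ ‖∫ x in Set.Icc (-a) a, gaussianPDFReal 0 1 x‖ := le_abs_self _
    _ ≤ (Real.sqrt (2 * Real.pi))⁻¹ * (volume (Set.Icc (-a) a)).toReal := by
        apply norm_setIntegral_le_of_norm_le_const _ hb
        rw [Real.volume_Icc]; exact ENNReal.ofReal_lt_top
    _ ≤ Real.sqrt (2 / Real.pi) * a := by
        rw [Real.volume_Icc, ENNReal.toReal_ofReal (by linarith), hkey]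
        rw [div_mul_eq_mul_div, inv_mul_eq_div]
        rw [div_le_div_iff₀ hsqrt2pi hsqrt2pi]
        ring_nf
        nlinarith [hsqrt2pi]

theorem minimax_construction_transition_condition {p : ℕ} (hp : 1 ≤ p)
    (β : EuclideanSpace ℝ (Fin p)) (hβ : ‖β‖ = 1)
    (C δ : ℝ) (hC : C ∈ Set.Ioc (0 : ℝ) 1) (hδ : δ ∈ Set.Ioo (0 : ℝ) (1/4))
    (t : ℝ) (ht : t ∈ Set.Ioo (0 : ℝ) (1/4)) :
    let m : ℝ := Real.sqrt (1 + δ ^ 2)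
    let η : EuclideanSpace ℝ (Fin p) → ℝ := fun x =>
      if |(inner ℝ β x : ℝ)| ≤ min (max (C * δ) (|x ⟨0, hp⟩| / (2 * m))) (1/4) then
        1/2 + (inner ℝ β x : ℝ) / C
      else
        1/2 + min (max δ (|x ⟨0, hp⟩| / (2 * C * m))) (1/4) * Real.sign (inner ℝ β x : ℝ)
    (stdGaussian p {x | |η x - 1/2| ≤ t}).toReal ≤ 5 * Real.sqrt (2 / Real.pi) * C * t := by
  intro m η
  obtain ⟨hC0, hC1⟩ := hC
  obtain ⟨hδ0, hδ4⟩ := hδ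
  obtain ⟨ht0, ht4⟩ := ht
  set i₀ : Fin p := ⟨0, hp⟩
  have hm1 : (1:ℝ) ≤ m := by
    rw [show (1:ℝ) = Real.sqrt 1 by simp]
    exact Real.sqrt_le_sqrt (by nlinarith)
  have hm0 : (0:ℝ) < m := lt_of_lt_of_le one_pos hm1
  have hm2 : m ≤ 2 := by
    rw [show (2:ℝ) = Real.sqrt 4 by
      rw [show (4:ℝ) = 2^2 by norm_num, Real.sqrt_sq]; norm_num]
    exact Real.sqrt_le_sqrt (by nlinarith)
  -- inclusion in the union of two slabs
  have hsub : {x : EuclideanSpace ℝ (Fin p) | |η x - 1/2| ≤ t}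
      ⊆ {x : EuclideanSpace ℝ (Fin p) | |(inner ℝ β x : ℝ)| ≤ C * t}
        ∪ {x : EuclideanSpace ℝ (Fin p) | |x i₀| ≤ 2 * C * m * t} := by
    intro x hx
    simp only [Set.mem_setOf_eq, η] at hx
    by_cases hcond : |(inner ℝ β x : ℝ)| ≤ min (max (C * δ) (|x i₀| / (2 * m))) (1/4)
    · left
      rw [if_pos hcond] at hx
      have : |(inner ℝ β x : ℝ) / C| ≤ t := by
        calc |(inner ℝ β x : ℝ) / C| = |1/2 + (inner ℝ β x : ℝ) / C - 1/2| := by ring_nf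
        _ ≤ t := hx
      rw [abs_div, abs_of_pos hC0, div_le_iff₀ hC0] at this
      simpa [Set.mem_setOf_eq, mul_comm] using this
    · right
      rw [if_neg hcond] at hx
      have hs0 : (inner ℝ β x : ℝ) ≠ 0 := by
        intro h0
        apply hcond
        rw [h0, abs_zero]
        exact le_min (le_trans (by positivity) (le_max_left _ _)) (by norm_num)
      have hsign : |Real.sign (inner ℝ β x : ℝ)| = 1 := by
        rcases lt_or_gt_of_ne hs0 with h | h
        · rw [Real.sign_of_neg h]; norm_num
        · rw [Real.sign_of_pos h]; norm_num
      have hMpos : (0:ℝ) ≤ min (max δ (|x i₀| / (2 * C * m))) (1/4) :=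
        le_min (le_trans hδ0.le (le_max_left _ _)) (by norm_num)
      have hM : min (max δ (|x i₀| / (2 * C * m))) (1/4) ≤ t := by
        calc min (max δ (|x i₀| / (2 * C * m))) (1/4)
            = |min (max δ (|x i₀| / (2 * C * m))) (1/4) * Real.sign (inner ℝ β x : ℝ)| := by
              rw [abs_mul, hsign, mul_one, abs_of_nonneg hMpos]
          _ = |1/2 + min (max δ (|x i₀| / (2 * C * m))) (1/4) * Real.sign (inner ℝ β x : ℝ) - 1/2| := by
              ring_nf
          _ ≤ t := hx
      have hmax : max δ (|x i₀| / (2 * C * m)) ≤ t := by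
        rcases min_le_iff.mp hM with h | h
        · exact h
        · linarith
      have := le_trans (le_max_right δ _) hmax
      rw [div_le_iff₀ (by positivity)] at this
      simp only [Set.mem_setOf_eq]
      calc |x i₀| ≤ t * (2 * C * m) := this
        _ = 2 * C * m * t := by ring
  -- measures of the two slabs
  have hinner : Measurable fun x : EuclideanSpace ℝ (Fin p) => (inner ℝ β x : ℝ) :=
    (continuous_const.inner continuous_id).measurable
  have heval : Measurable fun x : EuclideanSpace ℝ (Fin p) => x i₀ :=
    (measurable_pi_apply i₀).comp ((MeasurableEquiv.toLp 2 (Fin p → ℝ)).symm).measurable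
  have habs : ∀ c : ℝ, MeasurableSet {y : ℝ | |y| ≤ c} := fun c =>
    measurableSet_le continuous_abs.measurable measurable_const
  have hA : stdGaussian p {x : EuclideanSpace ℝ (Fin p) | |(inner ℝ β x : ℝ)| ≤ C * t}
      ≤ ENNReal.ofReal (Real.sqrt (2 / Real.pi) * (C * t)) := by
    have h1 := Measure.map_apply (μ := stdGaussian p) hinner (habs (C * t))
    rw [stdGaussian_map_inner hp β hβ] at h1
    have h2 : (fun x : EuclideanSpace ℝ (Fin p) => (inner ℝ β x : ℝ)) ⁻¹' {y : ℝ | |y| ≤ C * t}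
        = {x : EuclideanSpace ℝ (Fin p) | |(inner ℝ β x : ℝ)| ≤ C * t} := rfl
    rw [h2] at h1
    rw [← h1]
    exact gaussianReal_abs_le (by positivity)
  have hB : stdGaussian p {x : EuclideanSpace ℝ (Fin p) | |x i₀| ≤ 2 * C * m * t}
      ≤ ENNReal.ofReal (Real.sqrt (2 / Real.pi) * (2 * C * m * t)) := by
    have h1 := Measure.map_apply (μ := stdGaussian p) heval (habs (2 * C * m * t))
    rw [stdGaussian_map_eval i₀] at h1
    have h2 : (fun x : EuclideanSpace ℝ (Fin p) => x i₀) ⁻¹' {y : ℝ | |y| ≤ 2 * C * m * t}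
        = {x : EuclideanSpace ℝ (Fin p) | |x i₀| ≤ 2 * C * m * t} := rfl
    rw [h2] at h1
    rw [← h1]
    exact gaussianReal_abs_le (by positivity)
  have hsum : stdGaussian p {x | |η x - 1/2| ≤ t}
      ≤ ENNReal.ofReal (5 * Real.sqrt (2 / Real.pi) * C * t) := by
    calc stdGaussian p {x | |η x - 1/2| ≤ t}
        ≤ stdGaussian p ({x : EuclideanSpace ℝ (Fin p) | |(inner ℝ β x : ℝ)| ≤ C * t}
            ∪ {x : EuclideanSpace ℝ (Fin p) | |x i₀| ≤ 2 * C * m * t}) := measure_mono hsub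
      _ ≤ stdGaussian p {x : EuclideanSpace ℝ (Fin p) | |(inner ℝ β x : ℝ)| ≤ C * t}
            + stdGaussian p {x : EuclideanSpace ℝ (Fin p) | |x i₀| ≤ 2 * C * m * t} :=
          measure_union_le _ _
      _ ≤ ENNReal.ofReal (Real.sqrt (2 / Real.pi) * (C * t))
            + ENNReal.ofReal (Real.sqrt (2 / Real.pi) * (2 * C * m * t)) := add_le_add hA hB
      _ = ENNReal.ofReal (Real.sqrt (2 / Real.pi) * (C * t)
            + Real.sqrt (2 / Real.pi) * (2 * C * m * t)) :=
          (ENNReal.ofReal_add (by positivity) (by positivity)).symm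
      _ ≤ ENNReal.ofReal (5 * Real.sqrt (2 / Real.pi) * C * t) := by
          apply ENNReal.ofReal_le_ofReal
          nlinarith [Real.sqrt_nonneg (2 / Real.pi), mul_pos hC0 ht0,
            mul_nonneg (Real.sqrt_nonneg (2 / Real.pi)) (mul_pos hC0 ht0).le]
  exact ENNReal.toReal_le_of_le_ofReal (by positivity) hsum
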